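/- If K is a minimal set of a memoryless RDS admitting stable trajectories, then every point of K is almost surely stable. If in addition K is the only minimal set, then every point of X is almost surely stable and for each x ∈ X, almost surely d(φ(t,ω)x, K) → 0 as t → ∞. -/

import Mathlib

open MeasureTheory ProbabilityTheory Filter Topology

/-- A (discrete-time) filtered random dynamical system over a memoryless stationary
noise space, on a metric space `X`. -/
structure MRDS (Ω X : Type*) [mΩ : MeasurableSpace Ω] [MetricSpace X]
    [mX : MeasurableSpace X] [BorelSpace X] where
  P : Measure Ω
  hprob : IsProbabilityMeasure P
  F : ℕ → MeasurableSpace Ω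
  hle : ∀ t, F t ≤ mΩ
  hmono : Monotone F
  θ : ℕ → Ω → Ω
  hθ0 : θ 0 = id
  hθadd : ∀ s t, θ (s + t) = θ s ∘ θ t
  hθmeas : ∀ s t, @Measurable Ω Ω (F (s + t)) (F s) (θ t)
  hθpres : ∀ t, MeasurePreserving (θ t) P P
  memless : ∀ s, Indep (F s) ((⨆ t, F t).comap (θ s)) P
  φ : ℕ → Ω → X → X
  hφcont : ∀ t ω, Continuous (φ t ω)
  hφmeas : ∀ t, @Measurable (Ω × X) X ((F t).prod mX) mX (fun p => φ t p.1 p.2)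
  hφ0 : ∀ ω, φ 0 ω = id
  hφcocycle : ∀ s t ω, φ (s + t) ω = φ t (θ s ω) ∘ φ s ω

namespace MRDS

variable {Ω X : Type*} [MeasurableSpace Ω] [MetricSpace X]
  [MeasurableSpace X] [BorelSpace X]

/-- The one-point transition probabilities `φ_x^t`. -/
noncomputable def law (R : MRDS Ω X) (x : X) (t : ℕ) : Measure X :=
  R.P.map (fun ω => R.φ t ω x)

/-- A closed set that is forward-invariant for the one-point transition probabilities. -/
def FwdInv (R : MRDS Ω X) (K : Set X) : Prop :=
  IsClosed K ∧ ∀ x ∈ K, ∀ t, R.law x t K = 1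

/-- A minimal set: non-empty, closed, forward-invariant, with no proper non-empty closed
forward-invariant subsets. -/
def Minimal (R : MRDS Ω X) (K : Set X) : Prop :=
  K.Nonempty ∧ R.FwdInv K ∧ ∀ K' ⊆ K, R.FwdInv K' → K' = K ∨ K' = ∅

/-- `A` contracts under the noise realisation `ω`. -/
def contracts (R : MRDS Ω X) (ω : Ω) (A : Set X) : Prop :=
  Tendsto (fun t => EMetric.diam (R.φ t ω '' A)) atTop (𝓝 0)

/-- `(ω, x)` is an asymptotically stable pair. -/
def stablePair (R : MRDS Ω X) (ω : Ω) (x : X) : Prop :=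
  ∃ U ∈ 𝓝 x, R.contracts ω U

/-- The set of asymptotically stable pairs. -/
def O (R : MRDS Ω X) : Set (Ω × X) := {p | R.stablePair p.1 p.2}

/-- The set of noise realisations under which `U` contracts. -/
def EU (R : MRDS Ω X) (U : Set X) : Set Ω := {ω | R.contracts ω U}

/-- `x` is potentially stable. -/
def potStable (R : MRDS Ω X) (x : X) : Prop := 0 < R.P {ω | R.stablePair ω x}

/-- `x` is almost surely stable. -/
def asStable (R : MRDS Ω X) (x : X) : Prop := R.P {ω | R.stablePair ω x} = 1

/-- `φ` is globally synchronising. -/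
def synchronising (R : MRDS Ω X) : Prop :=
  ∀ x y : X,
    R.P {ω | Tendsto (fun t => dist (R.φ t ω x) (R.φ t ω y)) atTop (𝓝 0)} = 1

/-- `φ` is stably synchronising. -/
def stablySynchronising (R : MRDS Ω X) : Prop :=
  R.synchronising ∧ ∀ x : X, R.asStable x

/-- `ρ` is a stationary measure for the one-point transition probabilities. -/
def stationary (R : MRDS Ω X) (ρ : Measure X) : Prop :=
  ∀ t, ∀ A : Set X, MeasurableSet A → ∫⁻ x, R.law x t A ∂ρ = ρ A

end MRDS
section Dev
open TopologicalSpace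

variable {Ω X : Type*} [MeasurableSpace Ω] [MetricSpace X] [CompactSpace X]
  [MeasurableSpace X] [BorelSpace X]

/-- countable dense subset of an arbitrary set -/
lemma exists_countable_dense_in (s : Set X) :
    ∃ c ⊆ s, c.Countable ∧ s ⊆ closure c := by
  obtain ⟨t, htc, htd⟩ := TopologicalSpace.exists_countable_dense s
  refine ⟨(↑) '' t, by rintro x ⟨y, _, rfl⟩; exact y.2, htc.image _, fun x hx => ?_⟩
  have : (⟨x, hx⟩ : s) ∈ closure t := htd.closure_eq ▸ Set.mem_univ _
  exact closure_subtype.mp this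

lemma diam_image_eq {f : X → X} (hf : Continuous f) {U c : Set X}
    (hcU : c ⊆ U) (hUc : U ⊆ closure c) :
    EMetric.diam (f '' U) = ⨆ p ∈ c, ⨆ q ∈ c, edist (f p) (f q) := by
  have h1 : EMetric.diam (f '' c) = ⨆ p ∈ c, ⨆ q ∈ c, edist (f p) (f q) := by
    refine le_antisymm (EMetric.diam_le ?_) ?_
    · rintro x ⟨p, hp, rfl⟩ y ⟨q, hq, rfl⟩
      exact le_iSup₂_of_le p hp (le_iSup₂_of_le q hq le_rfl)
    · refine iSup₂_le fun p hp => iSup₂_le fun q hq =>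
        EMetric.edist_le_diam_of_mem (Set.mem_image_of_mem f hp) (Set.mem_image_of_mem f hq)
  refine le_antisymm ?_ (h1 ▸ EMetric.diam_mono (Set.image_mono hcU))
  calc EMetric.diam (f '' U) ≤ EMetric.diam (closure (f '' c)) := by
        refine EMetric.diam_mono ?_
        exact (Set.image_mono hUc).trans
          ((image_closure_subset_closure_image hf).trans (closure_mono Set.Subset.rfl))
    _ = EMetric.diam (f '' c) := EMetric.diam_closure _
    _ = _ := h1
end Dev
open scoped ENNReal

section Helpers
variable {α β γ : Type*} [m : MeasurableSpace α] [mβ : MeasurableSpace β]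
  [mγ : MeasurableSpace γ]

lemma helper_meas_pt {f : α × β → γ} (hf : Measurable f) (x : β) :
    Measurable fun a => f (a, x) := hf.comp (measurable_id.prodMk measurable_const)

lemma helper_meas_edist {Y : Type*} [PseudoEMetricSpace Y] [SecondCountableTopology Y] [MeasurableSpace Y] [OpensMeasurableSpace Y]
    {f g : α → Y} (hf : Measurable f) (hg : Measurable g) :
    Measurable fun a => edist (f a) (g a) := hf.edist hg

end Helpers

namespace MRDS
variable {Ω X : Type*} [mΩ : MeasurableSpace Ω] [MetricSpace X] [CompactSpace X]
  [mX : MeasurableSpace X] [BorelSpace X] (R : MRDS Ω X)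

/-- the supremum σ-algebra -/
def mSup (R : MRDS Ω X) : MeasurableSpace Ω := ⨆ t, R.F t

lemma mSup_le : R.mSup ≤ mΩ := iSup_le R.hle

lemma F_le_mSup (t : ℕ) : R.F t ≤ R.mSup := le_iSup R.F t

lemma meas_phi_pt (t : ℕ) (x : X) : Measurable[R.F t] (fun ω => R.φ t ω x) :=
  @helper_meas_pt Ω X X (R.F t) mX mX _ (R.hφmeas t) x

lemma meas_phi_pt' (t : ℕ) (x : X) : Measurable (fun ω => R.φ t ω x) :=
  (R.meas_phi_pt t x).mono (R.hle t) le_rfl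

lemma theta_meas_sup (t : ℕ) : @Measurable Ω Ω mΩ R.mSup (R.θ t) := by
  rw [@measurable_iff_comap_le, mSup, MeasurableSpace.comap_iSup]
  exact iSup_le fun s => le_trans
    ((@measurable_iff_comap_le _ _ (R.F (s + t)) (R.F s) _).mp (R.hθmeas s t)) (R.hle (s + t))

lemma theta_meas_sup' (t : ℕ) : @Measurable Ω Ω R.mSup R.mSup (R.θ t) := by
  rw [@measurable_iff_comap_le]
  conv_lhs => rw [mSup]
  rw [MeasurableSpace.comap_iSup]
  exact iSup_le fun s => le_trans
    ((@measurable_iff_comap_le _ _ (R.F (s + t)) (R.F s) _).mp (R.hθmeas s t)) (R.F_le_mSup (s + t))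

lemma meas_diam (t : ℕ) (U : Set X) :
    Measurable[R.F t] (fun ω => EMetric.diam (R.φ t ω '' U)) := by
  obtain ⟨c, hcU, hcc, hUc⟩ := exists_countable_dense_in U
  haveI : Countable c := hcc.to_subtype
  have h : (fun ω => EMetric.diam (R.φ t ω '' U))
      = fun ω => ⨆ (p : c) (q : c), edist (R.φ t ω (p : X)) (R.φ t ω (q : X)) := by
    funext ω
    rw [diam_image_eq (R.hφcont t ω) hcU hUc]
    simp_rw [iSup_subtype']
  rw [h]
  exact Measurable.iSup fun p => Measurable.iSup fun q =>
    @helper_meas_edist Ω (R.F t) X _ _ _ _ _ _ (R.meas_phi_pt t p) (R.meas_phi_pt t q)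

lemma measSet_EU (U : Set X) : MeasurableSet[R.mSup] (R.EU U) := by
  have hEU : R.EU U = ⋂ (n : ℕ), ⋃ (N : ℕ), ⋂ (t : ℕ), ⋂ (_ : N ≤ t),
      {ω | EMetric.diam (R.φ t ω '' U) ≤ ((n : ℝ≥0∞) + 1)⁻¹} := by
    ext ω
    simp only [EU, contracts, Set.mem_setOf_eq, Set.mem_iInter, Set.mem_iUnion,
      ENNReal.tendsto_atTop_zero]
    constructor
    · intro h n
      obtain ⟨N, hN⟩ := h ((n : ℝ≥0∞) + 1)⁻¹ (ENNReal.inv_pos.mpr (by simp [ENNReal.add_ne_top]))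
      exact ⟨N, fun t ht => hN t ht⟩
    · intro h ε hε
      obtain ⟨n, hn⟩ := ENNReal.exists_inv_nat_lt hε.ne'
      obtain ⟨N, hN⟩ := h n
      refine ⟨N, fun t ht => (hN t ht).trans ?_⟩
      refine le_of_lt (lt_of_le_of_lt ?_ hn)
      gcongr
      exact le_add_of_nonneg_right zero_le_one
  rw [hEU]
  refine MeasurableSet.iInter fun n => MeasurableSet.iUnion fun N =>
    MeasurableSet.iInter fun t => MeasurableSet.iInter fun _ => ?_
  exact R.F_le_mSup t _ ((R.meas_diam t U) measurableSet_Iic)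

end MRDS
namespace MRDS
variable {Ω X : Type*} [mΩ : MeasurableSpace Ω] [MetricSpace X] [CompactSpace X]
  [mX : MeasurableSpace X] [BorelSpace X] (R : MRDS Ω X)

open TopologicalSpace

lemma contracts_mono {ω : Ω} {U A : Set X} (h : R.contracts ω U) (hAU : A ⊆ U) :
    R.contracts ω A :=
  tendsto_of_tendsto_of_tendsto_of_le_of_le tendsto_const_nhds h
    (fun _ => zero_le) (fun t => EMetric.diam_mono (Set.image_mono hAU))

lemma stable_comp (t : ℕ) (ω : Ω) (x : X) {U : Set X} (hU : IsOpen U)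
    (hx : R.φ t ω x ∈ U) (hc : R.contracts (R.θ t ω) U) : R.stablePair ω x := by
  refine ⟨R.φ t ω ⁻¹' U, (hU.preimage (R.hφcont t ω)).mem_nhds hx, ?_⟩
  rw [contracts, ← Filter.tendsto_add_atTop_iff_nat t]
  refine tendsto_of_tendsto_of_tendsto_of_le_of_le tendsto_const_nhds hc
    (fun _ => zero_le) (fun s => ?_)
  have hco : R.φ (s + t) ω = R.φ s (R.θ t ω) ∘ R.φ t ω := by
    rw [add_comm]; exact R.hφcocycle t s ω
  refine EMetric.diam_mono ?_
  rw [hco, Set.image_comp]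
  exact Set.image_mono (Set.image_preimage_subset _ _)

lemma stable_iff_basis (ω : Ω) (x : X) :
    R.stablePair ω x ↔ ∃ V ∈ countableBasis X, x ∈ V ∧ ω ∈ R.EU V := by
  constructor
  · rintro ⟨U, hU, hc⟩
    obtain ⟨V, hVB, hxV, hVU⟩ := (isBasis_countableBasis X).mem_nhds_iff.mp hU
    exact ⟨V, hVB, hxV, R.contracts_mono hc hVU⟩
  · rintro ⟨V, hVB, hxV, hc⟩
    exact ⟨V, (isOpen_of_mem_countableBasis hVB).mem_nhds hxV, hc⟩

/-- joint stable-pair set, as a measurable set in the product -/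
def Wstab (R : MRDS Ω X) : Set (X × Ω) := ⋃ V ∈ countableBasis X, V ×ˢ R.EU V

lemma measSet_Wstab : MeasurableSet[mX.prod R.mSup] R.Wstab := by
  refine MeasurableSet.biUnion (countable_countableBasis X) fun V hV => ?_
  exact @MeasurableSet.prod X Ω mX R.mSup V (R.EU V)
    (isOpen_of_mem_countableBasis hV).measurableSet (R.measSet_EU V)

lemma stable_section (x : X) : {ω | R.stablePair ω x} = {ω' | (x, ω') ∈ R.Wstab} := by
  ext ω
  simp only [Set.mem_setOf_eq, R.stable_iff_basis ω x, Wstab, Set.mem_iUnion,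
    Set.mem_prod, exists_prop]

lemma measSet_section {W : Set (X × Ω)} (hW : MeasurableSet[mX.prod R.mSup] W) (z : X) :
    MeasurableSet[R.mSup] {ω' | (z, ω') ∈ W} :=
  (@measurable_prodMk_left X Ω mX R.mSup z) hW

lemma trim_finite : @IsFiniteMeasure Ω R.mSup (R.P.trim R.mSup_le) := by
  constructor
  rw [MeasureTheory.trim_measurableSet_eq R.mSup_le MeasurableSet.univ]
  haveI := R.hprob
  simp

lemma P_section_eq_trim {W : Set (X × Ω)} (hW : MeasurableSet[mX.prod R.mSup] W) (z : X) :
    R.P {ω' | (z, ω') ∈ W} = (R.P.trim R.mSup_le) {ω' | (z, ω') ∈ W} :=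
  (MeasureTheory.trim_measurableSet_eq R.mSup_le (R.measSet_section hW z)).symm

lemma meas_gW {W : Set (X × Ω)} (hW : MeasurableSet[mX.prod R.mSup] W) :
    Measurable (fun z => R.P {ω' | (z, ω') ∈ W}) := by
  have h := funext fun z => R.P_section_eq_trim hW z
  rw [h]
  exact @measurable_measure_prodMk_left_finite X Ω mX R.mSup (R.P.trim R.mSup_le)
    R.trim_finite W hW

lemma gW_le_one {W : Set (X × Ω)} (z : X) : R.P {ω' | (z, ω') ∈ W} ≤ 1 := by
  haveI := R.hprob
  exact (MeasureTheory.measure_mono (Set.subset_univ _)).trans (by simp)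

end MRDS
section Helpers2
variable {α β γ : Type*} [mα : MeasurableSpace α] [mβ : MeasurableSpace β]
  [mγ : MeasurableSpace γ]

lemma helper_pair {f : α → β} {g : α → γ} (hf : Measurable f) (hg : Measurable g) :
    Measurable fun a => (f a, g a) := hf.prodMk hg

end Helpers2

namespace MRDS
variable {Ω X : Type*} [mΩ : MeasurableSpace Ω] [MetricSpace X] [CompactSpace X]
  [mX : MeasurableSpace X] [BorelSpace X] (R : MRDS Ω X)

lemma indep_mul (t : ℕ) {A : Set Ω} (hA : MeasurableSet[R.F t] A) {B : Set Ω}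
    (hB : MeasurableSet[R.mSup] B) :
    R.P (A ∩ R.θ t ⁻¹' B) = R.P A * R.P B := by
  have h := (Indep_iff _ _ _).mp (R.memless t) A (R.θ t ⁻¹' B) hA ⟨B, hB, rfl⟩
  rw [h, (R.hθpres t).measure_preimage (R.mSup_le _ hB).nullMeasurableSet]

lemma meas_pair (t : ℕ) {ξ : Ω → X} (hξ : Measurable[R.F t] ξ) :
    @Measurable Ω (X × Ω) mΩ (mX.prod R.mSup) (fun ω => (ξ ω, R.θ t ω)) :=
  @helper_pair Ω X Ω mΩ mX R.mSup _ _ (hξ.mono (R.hle t) le_rfl) (R.theta_meas_sup t)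

/-- The freezing / Markov-property identity. -/
lemma freeze (t : ℕ) {ξ : Ω → X} (hξ : Measurable[R.F t] ξ) {A : Set Ω}
    (hA : MeasurableSet[R.F t] A) {W : Set (X × Ω)}
    (hW : MeasurableSet[mX.prod R.mSup] W) :
    R.P (A ∩ {ω | (ξ ω, R.θ t ω) ∈ W}) = ∫⁻ ω in A, R.P {ω' | (ξ ω, ω') ∈ W} ∂ R.P := by
  classical
  haveI := R.hprob
  have hAm : MeasurableSet A := R.hle t _ hA
  have hξm : Measurable ξ := hξ.mono (R.hle t) le_rfl
  -- induction on W
  refine MeasurableSpace.induction_on_inter (m := mX.prod R.mSup)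
    (C := fun W _ => R.P (A ∩ {ω | (ξ ω, R.θ t ω) ∈ W}) = ∫⁻ ω in A, R.P {ω' | (ξ ω, ω') ∈ W} ∂ R.P)
    (@generateFrom_prod X Ω mX R.mSup).symm
    (@isPiSystem_prod X Ω mX R.mSup) ?_ ?_ ?_ ?_ W hW
  · simp
  · -- rectangles
    rintro _ ⟨S, hS, B, hB, rfl⟩
    simp only [Set.mem_setOf_eq] at hS hB
    have h1 : {ω | (ξ ω, R.θ t ω) ∈ S ×ˢ B} = ξ ⁻¹' S ∩ R.θ t ⁻¹' B := rfl
    have h2 : ∀ ω, R.P {ω' | (ξ ω, ω') ∈ S ×ˢ B}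
        = (ξ ⁻¹' S).indicator (fun _ => R.P B) ω := by
      intro ω
      by_cases h : ξ ω ∈ S
      · simp only [Set.indicator_of_mem (by exact h : ω ∈ ξ ⁻¹' S)]
        congr 1
        ext ω'
        simp [h]
      · simp only [Set.indicator_of_notMem (by exact h : ω ∉ ξ ⁻¹' S)]
        convert measure_empty
        · ext ω'; simp [h]
        · infer_instance
    rw [h1, ← Set.inter_assoc, R.indep_mul t (hA.inter (hξ hS)) hB]
    simp only [h2]
    rw [lintegral_indicator (hξm hS)]
    rw [Measure.restrict_restrict (hξm hS), setLIntegral_const, Set.inter_comm A]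
    ring
  · -- complements
    intro W hWm hC
    have hTm : MeasurableSet {ω | (ξ ω, R.θ t ω) ∈ W} := R.meas_pair t hξ hWm
    have hgm : Measurable fun ω => R.P {ω' | (ξ ω, ω') ∈ W} :=
      (R.meas_gW hWm).comp hξm
    have h1 : A ∩ {ω | (ξ ω, R.θ t ω) ∈ Wᶜ} = A \ (A ∩ {ω | (ξ ω, R.θ t ω) ∈ W}) := by
      ext ω; simp only [Set.mem_inter_iff, Set.mem_setOf_eq, Set.mem_compl_iff,
        Set.mem_diff]; tauto
    have h2 : ∀ ω, R.P {ω' | (ξ ω, ω') ∈ Wᶜ} = 1 - R.P {ω' | (ξ ω, ω') ∈ W} := by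
      intro ω
      have : {ω' | (ξ ω, ω') ∈ Wᶜ} = {ω' | (ξ ω, ω') ∈ W}ᶜ := rfl
      rw [this, measure_compl (R.mSup_le _ (R.measSet_section hWm (ξ ω)))
        (measure_ne_top _ _), measure_univ]
    rw [h1, measure_diff Set.inter_subset_left
      (hAm.inter hTm).nullMeasurableSet (measure_ne_top _ _), hC]
    simp only [h2]
    rw [lintegral_sub hgm]
    · congr 1
      rw [lintegral_one, Measure.restrict_apply MeasurableSet.univ, Set.univ_inter]
    · refine ne_of_lt (lt_of_le_of_lt (lintegral_mono fun ω => R.gW_le_one _) ?_)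
      rw [lintegral_one, Measure.restrict_apply MeasurableSet.univ, Set.univ_inter]
      exact lt_of_le_of_lt prob_le_one (by norm_num)
    · exact Filter.Eventually.of_forall fun ω => R.gW_le_one _
  · -- countable disjoint unions
    intro f hdisj hfm hC
    have h1 : A ∩ {ω | (ξ ω, R.θ t ω) ∈ ⋃ n, f n} = ⋃ n, A ∩ {ω | (ξ ω, R.θ t ω) ∈ f n} := by
      ext ω
      simp only [Set.mem_inter_iff, Set.mem_setOf_eq, Set.mem_iUnion]
      tauto
    have h2 : ∀ ω, R.P {ω' | (ξ ω, ω') ∈ ⋃ n, f n} = ∑' n, R.P {ω' | (ξ ω, ω') ∈ f n} := by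
      intro ω
      have he : {ω' | (ξ ω, ω') ∈ ⋃ n, f n} = ⋃ n, {ω' | (ξ ω, ω') ∈ f n} := by
        ext ω'; simp [Set.mem_iUnion]
      rw [he]
      refine measure_iUnion ?_ (fun n => R.mSup_le _ (R.measSet_section (hfm n) (ξ ω)))
      intro m n hmn
      exact (hdisj hmn).preimage (Prod.mk (ξ ω))
    have hdisj2 : Pairwise (Function.onFun Disjoint
        fun n => A ∩ {ω | (ξ ω, R.θ t ω) ∈ f n}) := by
      intro m n hmn
      have hd := (hdisj hmn).preimage (fun ω => (ξ ω, R.θ t ω))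
      exact hd.mono Set.inter_subset_right Set.inter_subset_right
    rw [h1, measure_iUnion hdisj2 (fun n => hAm.inter (R.meas_pair t hξ (hfm n)))]
    simp only [h2]
    have hl := lintegral_tsum (μ := R.P.restrict A)
      (f := fun n ω => R.P {ω' | (ξ ω, ω') ∈ f n})
      (fun n => ((R.meas_gW (hfm n)).comp hξm).aemeasurable)
    rw [hl]
    exact tsum_congr hC

end MRDS
section Helpers3
variable {α β : Type*} [mα : MeasurableSpace α]

lemma prodmono {m m' : MeasurableSpace β} (h : m ≤ m') :
    mα.prod m ≤ mα.prod m' :=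
  sup_le_sup le_rfl (MeasurableSpace.comap_mono h)

end Helpers3

namespace MRDS
variable {Ω X : Type*} [mΩ : MeasurableSpace Ω] [MetricSpace X] [CompactSpace X]
  [mX : MeasurableSpace X] [BorelSpace X] (R : MRDS Ω X)

lemma law_apply (x : X) (t : ℕ) {B : Set X} (hB : MeasurableSet B) :
    R.law x t B = R.P {ω | R.φ t ω x ∈ B} :=
  Measure.map_apply (R.meas_phi_pt' t x) hB

lemma law_prob (x : X) (t : ℕ) : IsProbabilityMeasure (R.law x t) := by
  haveI := R.hprob
  exact Measure.isProbabilityMeasure_map (R.meas_phi_pt' t x).aemeasurable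

lemma law_zero {B : Set X} (hB : MeasurableSet B) {x : X} (hx : x ∈ B) :
    R.law x 0 B = 1 := by
  haveI := R.hprob
  rw [R.law_apply x 0 hB]
  have : {ω : Ω | R.φ 0 ω x ∈ B} = Set.univ := by
    ext ω; simp [R.hφ0 ω, hx]
  rw [this, measure_univ]

lemma ae_phi_mem {L : Set X} (hL : MeasurableSet L) {x : X} {t : ℕ}
    (h : R.law x t L = 1) : ∀ᵐ ω ∂ R.P, R.φ t ω x ∈ L := by
  haveI := R.hprob
  rw [R.law_apply x t hL] at h
  rw [MeasureTheory.ae_iff]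
  have heq : {ω | ¬ R.φ t ω x ∈ L} = ((fun ω => R.φ t ω x) ⁻¹' L)ᶜ := rfl
  have h' : R.P ((fun ω => R.φ t ω x) ⁻¹' L) = 1 := h
  rw [heq, measure_compl ((R.meas_phi_pt' t x) hL) (measure_ne_top _ _), h', measure_univ,
    tsub_self]


/-- the transition event `{(z, ω') | φ s ω' z ∈ B}` is product-measurable -/
lemma measSet_transition (s : ℕ) {B : Set X} (hB : MeasurableSet B) :
    MeasurableSet[mX.prod R.mSup] {p : X × Ω | R.φ s p.2 p.1 ∈ B} := by
  have hsw : @Measurable (X × Ω) (Ω × X) (mX.prod (R.F s)) ((R.F s).prod mX) Prod.swap :=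
    @measurable_swap X Ω mX (R.F s)
  have hφ : @Measurable (X × Ω) X (mX.prod (R.F s)) mX (fun p => R.φ s p.2 p.1) :=
    (R.hφmeas s).comp hsw
  have h := hφ hB
  exact (prodmono (R.F_le_mSup s)) _ h

lemma law_eq_section (s : ℕ) {B : Set X} (hB : MeasurableSet B) (z : X) :
    R.P {ω' | (z, ω') ∈ {p : X × Ω | R.φ s p.2 p.1 ∈ B}} = R.law z s B :=
  (R.law_apply z s hB).symm

/-- Chapman–Kolmogorov. -/
lemma chapman (x : X) (t s : ℕ) {B : Set X} (hB : MeasurableSet B) :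
    R.law x (t + s) B = ∫⁻ z, R.law z s B ∂(R.law x t) := by
  haveI := R.hprob
  have hW := R.measSet_transition s hB
  have hfr := R.freeze t (R.meas_phi_pt t x) (MeasurableSet.univ) hW
  rw [Set.univ_inter, Measure.restrict_univ] at hfr
  have h1 : {ω | (R.φ t ω x, R.θ t ω) ∈ {p : X × Ω | R.φ s p.2 p.1 ∈ B}}
      = {ω | R.φ (t + s) ω x ∈ B} := by
    ext ω
    simp only [Set.mem_setOf_eq, R.hφcocycle t s ω, Function.comp_apply]
  rw [h1] at hfr
  have h2 : (fun ω => R.P {ω' | (R.φ t ω x, ω') ∈ {p : X × Ω | R.φ s p.2 p.1 ∈ B}})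
      = fun ω => R.law (R.φ t ω x) s B := by
    funext ω; exact R.law_eq_section s hB _
  rw [h2] at hfr
  rw [R.law_apply x (t + s) hB, hfr, law]
  rw [lintegral_map ?_ (R.meas_phi_pt' t x)]
  · have := R.meas_gW hW
    have h3 : (fun z => R.P {ω' | (z, ω') ∈ {p : X × Ω | R.φ s p.2 p.1 ∈ B}})
        = fun z => R.law z s B := by
      funext z; exact R.law_eq_section s hB z
    rwa [h3] at this

lemma meas_law (s : ℕ) {B : Set X} (hB : MeasurableSet B) :
    Measurable fun z => R.law z s B := by
  have := R.meas_gW (R.measSet_transition s hB)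
  have h3 : (fun z => R.P {ω' | (z, ω') ∈ {p : X × Ω | R.φ s p.2 p.1 ∈ B}})
      = fun z => R.law z s B := by
    funext z; exact R.law_eq_section s hB z
  rwa [h3] at this

/-- lower semicontinuity of hitting an open set -/
lemma isOpen_law_pos (t : ℕ) {U : Set X} (hU : IsOpen U) (ε : ℝ≥0∞) :
    IsOpen {y | ε < R.law y t U} := by
  rw [← isClosed_compl_iff]
  refine IsSeqClosed.isClosed ?_
  intro ys y hys hlim
  simp only [Set.mem_compl_iff, Set.mem_setOf_eq, not_lt] at hys ⊢
  rw [R.law_apply y t hU.measurableSet]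
  have hsub : {ω | R.φ t ω y ∈ U} ⊆ ⋃ N, ⋂ n, ⋂ (_ : N ≤ n), {ω | R.φ t ω (ys n) ∈ U} := by
    intro ω hω
    have hc : Tendsto (fun n => R.φ t ω (ys n)) atTop (𝓝 (R.φ t ω y)) :=
      ((R.hφcont t ω).tendsto y).comp hlim
    obtain ⟨N, hN⟩ := (hc.eventually (hU.eventually_mem hω)).exists_forall_of_atTop
    exact Set.mem_iUnion.mpr ⟨N, Set.mem_iInter.mpr fun n => Set.mem_iInter.mpr fun hn => hN n hn⟩
  refine le_trans (measure_mono hsub) ?_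
  have hmono : Monotone fun N => ⋂ n, ⋂ (_ : N ≤ n), {ω | R.φ t ω (ys n) ∈ U} := by
    intro a b hab
    exact Set.iInter_mono fun n => Set.iInter_mono' fun h => ⟨le_trans hab h, le_rfl⟩
  rw [hmono.measure_iUnion]
  refine iSup_le fun N => ?_
  have hsub2 : (⋂ n, ⋂ (_ : N ≤ n), {ω | R.φ t ω (ys n) ∈ U})
      ⊆ {ω | R.φ t ω (ys N) ∈ U} := fun ω hω => by
    exact (Set.mem_iInter.mp (Set.mem_iInter.mp hω N)) le_rfl
  calc R.P (⋂ n, ⋂ (_ : N ≤ n), {ω | R.φ t ω (ys n) ∈ U})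
      ≤ R.P {ω | R.φ t ω (ys N) ∈ U} := measure_mono hsub2
    _ ≤ ε := by rw [← R.law_apply (ys N) t hU.measurableSet]; exact hys N

end MRDS
section Helpers4
variable {α : Type*} [MeasurableSpace α]

lemma meas_one_iInter {μ : Measure α} [IsProbabilityMeasure μ] {g : ℕ → Set α}
    (hm : ∀ n, MeasurableSet (g n)) (h1 : ∀ n, μ (g n) = 1) : μ (⋂ n, g n) = 1 := by
  have hc : μ ((⋂ n, g n)ᶜ) = 0 := by
    rw [Set.compl_iInter]
    refine le_antisymm (le_trans (measure_iUnion_le _) ?_) (zero_le)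
    have : ∀ n, μ ((g n)ᶜ) = 0 := fun n => by
      rw [measure_compl (hm n) (measure_ne_top _ _), h1 n, measure_univ, tsub_self]
    simp [this]
  have h2 := measure_compl (MeasurableSet.iInter hm) (measure_ne_top μ _)
  rw [hc, measure_univ] at h2
  have h3 : (1 : ℝ≥0∞) ≤ μ (⋂ n, g n) := tsub_eq_zero_iff_le.mp h2.symm
  exact le_antisymm prob_le_one h3

end Helpers4

namespace MRDS
variable {Ω X : Type*} [mΩ : MeasurableSpace Ω] [MetricSpace X] [CompactSpace X]
  [mX : MeasurableSpace X] [BorelSpace X] (R : MRDS Ω X)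

lemma noAccess_fwdInv {L U : Set X} (hL : R.FwdInv L) (hU : IsOpen U) :
    R.FwdInv {y ∈ L | ∀ t, R.law y t U = 0} := by
  classical
  set K' := {y ∈ L | ∀ t, R.law y t U = 0} with hK'def
  have hclosed : IsClosed K' := by
    have heq : K' = L ∩ ⋂ t, {y | 0 < R.law y t U}ᶜ := by
      ext y
      simp only [hK'def, Set.mem_setOf_eq, Set.mem_inter_iff, Set.mem_iInter,
        Set.mem_compl_iff, not_lt, le_zero_iff]
    rw [heq]
    exact hL.1.inter (isClosed_iInter fun t => (R.isOpen_law_pos t hU 0).isClosed_compl)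
  refine ⟨hclosed, fun y hy t => ?_⟩
  haveI := R.law_prob y t
  have hbad : ∀ s : ℕ, R.law y t {z | 0 < R.law z s U} = 0 := by
    intro s
    have hck := R.chapman y t s hU.measurableSet
    rw [hy.2 (t + s)] at hck
    have hae := (lintegral_eq_zero_iff (R.meas_law s hU.measurableSet)).mp hck.symm
    rw [Filter.EventuallyEq, ae_iff] at hae
    refine le_antisymm (le_trans (measure_mono ?_) hae.le) (zero_le)
    intro z hz
    simp only [Set.mem_setOf_eq, Pi.zero_apply] at hz ⊢
    exact hz.ne'
  have hB : R.law y t (⋃ s, {z | 0 < R.law z s U}) = 0 := measure_iUnion_null hbad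
  have hKK : R.law y t (L \ ⋃ s, {z | 0 < R.law z s U}) = 1 := by
    rw [measure_diff_null hB]
    exact hL.2 y hy.1 t
  refine le_antisymm prob_le_one (le_trans hKK.ge (measure_mono ?_))
  intro z hz
  refine ⟨hz.1, fun s => ?_⟩
  have := hz.2
  simp only [Set.mem_iUnion, Set.mem_setOf_eq, not_exists, not_lt, le_zero_iff] at this
  exact this s

lemma fwdInv_univ : R.FwdInv (Set.univ : Set X) := by
  refine ⟨isClosed_univ, fun x _ t => ?_⟩
  haveI := R.law_prob x t
  exact measure_univ

lemma access_of_minimal {K U : Set X} (hmin : R.Minimal K) (hU : IsOpen U)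
    (hUK : (U ∩ K).Nonempty) : ∀ y ∈ K, ∃ t, 0 < R.law y t U := by
  classical
  set K' := {y ∈ K | ∀ t, R.law y t U = 0} with hK'def
  have hsub : K' ⊆ K := fun y hy => hy.1
  have hinv : R.FwdInv K' := R.noAccess_fwdInv hmin.2.1 hU
  have hKe : K' = ∅ := by
    rcases hmin.2.2 K' hsub hinv with h | h
    · exfalso
      obtain ⟨x0, hx0U, hx0K⟩ := hUK
      have hx0 : x0 ∈ K' := h.symm ▸ hx0K
      have := hx0.2 0
      rw [R.law_zero hU.measurableSet hx0U] at this
      exact one_ne_zero this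
    · exact h
  intro y hy
  by_contra h
  push_neg at h
  have : y ∈ K' := ⟨hy, fun t => le_antisymm (h t) (zero_le)⟩
  rw [hKe] at this
  exact this

lemma exists_minimal_subset {L : Set X} (hL : R.FwdInv L) (hne : L.Nonempty) :
    ∃ M, M ⊆ L ∧ R.Minimal M := by
  classical
  set S : Set (Set X) := {C | C ⊆ L ∧ C.Nonempty ∧ R.FwdInv C} with hSdef
  have H : ∀ c ⊆ S, IsChain (· ⊆ ·) c → c.Nonempty → ∃ lb ∈ S, ∀ s ∈ c, lb ⊆ s := by
    intro c hcS hchain hcne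
    haveI : Nonempty c := hcne.to_subtype
    obtain ⟨c0, hc0⟩ := hcne
    have hcl : ∀ C ∈ c, IsClosed C := fun C hC => (hcS hC).2.2.1
    have hcn : ∀ C ∈ c, C.Nonempty := fun C hC => (hcS hC).2.1
    have hne' : (⋂₀ c).Nonempty := by
      refine IsCompact.nonempty_sInter_of_directed_nonempty_isCompact_isClosed
        ?_ hcn (fun C hC => (hcl C hC).isCompact) hcl
      intro a ha b hb
      rcases hchain.total ha hb with h | h
      · exact ⟨a, ha, Set.Subset.rfl, h⟩
      · exact ⟨b, hb, h, Set.Subset.rfl⟩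
    have hclosed : IsClosed (⋂₀ c) := isClosed_sInter hcl
    have hinvar : ∀ y ∈ ⋂₀ c, ∀ t, R.law y t (⋂₀ c) = 1 := by
      intro y hy t
      haveI := R.law_prob y t
      -- reduce to countable subfamily
      obtain ⟨T, hTc, hTsub, hTU⟩ := TopologicalSpace.isOpen_sUnion_countable
        (compl '' c) (by rintro _ ⟨C, hC, rfl⟩; exact (hcl C hC).isOpen_compl)
      set c'' : Set (Set X) := {C ∈ c | Cᶜ ∈ T} with hc''def
      have hc''count : c''.Countable := by
        have : c'' ⊆ compl '' T := by
          intro C hC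
          exact ⟨Cᶜ, hC.2, compl_compl C⟩
        exact (hTc.image compl).mono this
      have hIeq : ⋂₀ c = ⋂₀ c'' := by
        have h1 : ⋃₀ T = ⋃₀ (compl '' c'') := by
          apply Set.Subset.antisymm
          · intro x hx
            obtain ⟨t0, ht0T, hxt0⟩ := hx
            obtain ⟨C, hCc, rfl⟩ := hTsub ht0T
            exact ⟨Cᶜ, ⟨C, ⟨hCc, ht0T⟩, rfl⟩, hxt0⟩
          · intro x hx
            obtain ⟨_, ⟨C, hC, rfl⟩, hxC⟩ := hx
            exact ⟨Cᶜ, hC.2, hxC⟩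
        have h2 : ⋃₀ (compl '' c) = ⋃₀ (compl '' c'') := by rw [← hTU, h1]
        have h3 : (⋂₀ c)ᶜ = (⋂₀ c'')ᶜ := by
          rw [Set.compl_sInter, Set.compl_sInter, h2]
        exact compl_injective (by simpa using h3)
      rcases Set.eq_empty_or_nonempty c'' with hce | hcne''
      · rw [hIeq, hce]
        simp
      · obtain ⟨f, hf⟩ := hc''count.exists_eq_range hcne''
        rw [hIeq, hf, Set.sInter_range]
        refine meas_one_iInter (fun n => ?_) (fun n => ?_)
        · have : f n ∈ c'' := hf ▸ Set.mem_range_self n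
          exact (hcl _ this.1).measurableSet
        · have hmem : f n ∈ c'' := hf ▸ Set.mem_range_self n
          have hyf : y ∈ f n := hy _ hmem.1
          exact (hcS hmem.1).2.2.2 y hyf t
    refine ⟨⋂₀ c, ⟨(Set.sInter_subset_of_mem hc0).trans (hcS hc0).1, hne', hclosed, hinvar⟩,
      fun s hs => Set.sInter_subset_of_mem hs⟩
  obtain ⟨m, hmL, hm⟩ := zorn_superset_nonempty S H L ⟨Set.Subset.rfl, hne, hL⟩
  refine ⟨m, hmL, hm.1.2.1, hm.1.2.2, fun K'' hK''m hK''inv => ?_⟩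
  rcases Set.eq_empty_or_nonempty K'' with he | hne''
  · exact Or.inr he
  · refine Or.inl (Set.Subset.antisymm hK''m (hm.2 ?_ hK''m))
    exact ⟨hK''m.trans hmL, hne'', hK''inv⟩

end MRDS
namespace MRDS
variable {Ω X : Type*} [mΩ : MeasurableSpace Ω] [MetricSpace X] [CompactSpace X]
  [mX : MeasurableSpace X] [BorelSpace X] (R : MRDS Ω X)

/-- the filtration of an MRDS -/
def filt (R : MRDS Ω X) : Filtration ℕ mΩ := ⟨R.F, R.hmono, R.hle⟩

lemma filt_iSup : (⨆ n, R.filt n) = R.mSup := rfl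

/-- The key martingale (Lévy upward) argument: an `mSup`-measurable event `S` which, at every
time `t`, contains the event "the frozen event `W` happens for the pair
`(φ t ω x, θ t ω)`", and such that the `W`-sections have probability uniformly bounded below
along the trajectory, has probability one. -/
lemma levy_one (x : X) {W : Set (X × Ω)} (hW : MeasurableSet[mX.prod R.mSup] W)
    {S : Set Ω} (hS : MeasurableSet[R.mSup] S)
    (hsup : ∀ t : ℕ, {ω | (R.φ t ω x, R.θ t ω) ∈ W} ⊆ S)
    {δ : ℝ≥0∞} (hδpos : 0 < δ) (hδtop : δ ≠ ⊤)
    {L : Set X} (hLmeas : MeasurableSet L)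
    (hlaw : ∀ t, R.law x t L = 1)
    (hδ : ∀ z ∈ L, δ ≤ R.P {ω' | (z, ω') ∈ W}) :
    R.P S = 1 := by
  classical
  haveI := R.hprob
  have hSm : MeasurableSet S := R.mSup_le _ hS
  set f : Ω → ℝ := S.indicator (fun _ => (1 : ℝ)) with hfdef
  have hfint : Integrable f R.P := (integrable_const (1:ℝ)).indicator hSm
  have hfmeas : StronglyMeasurable[⨆ n, R.filt n] f := by
    rw [filt_iSup]
    exact stronglyMeasurable_const.indicator hS
  have hlevy := hfint.tendsto_ae_condExp hfmeas
  -- the per-time lower bound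
  have hbound : ∀ t : ℕ, ∀ᵐ ω ∂ R.P, δ.toReal ≤ (R.P[f|R.filt t]) ω := by
    intro t
    set T : Set Ω := {ω | (R.φ t ω x, R.θ t ω) ∈ W} with hTdef
    have hTm : MeasurableSet T := R.meas_pair t (R.meas_phi_pt t x) hW
    set g : Ω → ℝ := fun ω => (R.P {ω' | (R.φ t ω x, ω') ∈ W}).toReal with hgdef
    have hgm : Measurable[R.F t] fun ω => R.P {ω' | (R.φ t ω x, ω') ∈ W} :=
      (R.meas_gW hW).comp (R.meas_phi_pt t x)
    have hgm' : StronglyMeasurable[R.F t] g :=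
      (@Measurable.ennreal_toReal Ω (R.F t) _ hgm).stronglyMeasurable
    have hgm'' : Measurable g := hgm'.measurable.mono (R.hle t) le_rfl
    have hgb : ∀ ω, ‖g ω‖ ≤ 1 := by
      intro ω
      rw [Real.norm_eq_abs, abs_of_nonneg ENNReal.toReal_nonneg]
      exact ENNReal.toReal_le_of_le_ofReal zero_le_one (by simpa using R.gW_le_one _)
    have hgint : Integrable g R.P :=
      (integrable_const (1:ℝ)).mono' hgm''.aestronglyMeasurable
        (Filter.Eventually.of_forall hgb)
    haveI : SigmaFinite (R.P.trim (R.hle t)) := by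
      have : IsFiniteMeasure (R.P.trim (R.hle t)) := by
        constructor
        rw [MeasureTheory.trim_measurableSet_eq (R.hle t) MeasurableSet.univ]
        simp
      infer_instance
    have hcond : g =ᵐ[R.P] R.P[T.indicator (fun _ => (1:ℝ))|R.F t] := by
      refine ae_eq_condExp_of_forall_setIntegral_eq (R.hle t)
        ((integrable_const (1:ℝ)).indicator hTm)
        (fun s _ _ => hgint.integrableOn) (fun s hs _ => ?_)
        (hgm'.aestronglyMeasurable)
      have hfr := R.freeze t (R.meas_phi_pt t x) hs hW
      have hsmeas : MeasurableSet s := R.hle t _ hs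
      -- RHS
      rw [setIntegral_indicator hTm, setIntegral_const, smul_eq_mul, mul_one, measureReal_def]
      -- LHS
      have hlhs : ∫ ω in s, g ω ∂ R.P
          = (∫⁻ ω in s, R.P {ω' | (R.φ t ω x, ω') ∈ W} ∂ R.P).toReal := by
        rw [hgdef]
        refine integral_toReal ((hgm.mono (R.hle t) le_rfl).aemeasurable) ?_
        exact Filter.Eventually.of_forall fun ω =>
          lt_of_le_of_lt (R.gW_le_one _) ENNReal.one_lt_top
      rw [hlhs, ← hfr, Set.inter_comm]
    have haeL : ∀ᵐ ω ∂ R.P, R.φ t ω x ∈ L := R.ae_phi_mem hLmeas (hlaw t)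
    have hmono := condExp_mono (m := R.F t) (μ := R.P)
      ((integrable_const (1:ℝ)).indicator hTm) hfint
      (Filter.Eventually.of_forall
        (Set.indicator_le_indicator_of_subset (hsup t) (fun _ => zero_le_one)))
    filter_upwards [hcond, hmono, haeL] with ω h1 h2 h3
    refine le_trans ?_ (h1 ▸ h2)
    rw [hgdef]
    refine ENNReal.toReal_mono ?_ (hδ _ h3)
    exact ne_top_of_le_ne_top ENNReal.one_ne_top (R.gW_le_one _)
  have hball : ∀ᵐ ω ∂ R.P, ∀ t : ℕ, δ.toReal ≤ (R.P[f|R.filt t]) ω :=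
    (MeasureTheory.ae_all_iff).mpr hbound
  have hae : ∀ᵐ ω ∂ R.P, ω ∈ S := by
    filter_upwards [hlevy, hball] with ω hlim hb
    by_contra hωS
    have hf0 : f ω = 0 := Set.indicator_of_notMem hωS _
    have : δ.toReal ≤ f ω := ge_of_tendsto' hlim fun t => hb t
    rw [hf0] at this
    exact absurd this (not_le.mpr (ENNReal.toReal_pos hδpos.ne' hδtop))
  have h0 : R.P Sᶜ = 0 := by
    rw [ae_iff] at hae
    exact hae
  exact (prob_compl_eq_zero_iff hSm).mp h0

end MRDS
namespace MRDS
variable {Ω X : Type*} [mΩ : MeasurableSpace Ω] [MetricSpace X] [CompactSpace X]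
  [mX : MeasurableSpace X] [BorelSpace X] (R : MRDS Ω X)

lemma EU_subset_stable_section {U : Set X} (hU : IsOpen U) (t : ℕ) (x : X) :
    {ω | R.φ t ω x ∈ U} ∩ R.θ t ⁻¹' (R.EU U) ⊆ {ω | R.stablePair ω x} :=
  fun ω hω => R.stable_comp t ω x hU hω.1 hω.2

lemma stable_prob_lb {U : Set X} (hU : IsOpen U) (t : ℕ) (z : X) :
    R.law z t U * R.P (R.EU U) ≤ R.P {ω | R.stablePair ω z} := by
  rw [R.law_apply z t hU.measurableSet,
    ← R.indep_mul t (A := {ω | R.φ t ω z ∈ U}) ((R.meas_phi_pt t z) hU.measurableSet)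
      (R.measSet_EU U)]
  exact measure_mono (R.EU_subset_stable_section hU t z)

/-- Uniform accessibility over a compact set via a covering argument. -/
lemma unif_access {L : Set X} (hLcomp : IsCompact L) (hLne : L.Nonempty)
    {U : Set X} (hUopen : IsOpen U)
    (haccess : ∀ y ∈ L, ∃ t, 0 < R.law y t U) :
    ∃ δ : ℝ≥0∞, 0 < δ ∧ δ ≤ 1 ∧ ∀ z ∈ L, ∃ t, δ ≤ R.law z t U := by
  classical
  haveI := R.hprob
  have hch : ∀ y : L, ∃ t, 0 < R.law (y : X) t U := fun y => haccess y y.2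
  choose ty hty using hch
  have hlawle : ∀ (z : X) (t : ℕ), R.law z t U ≤ 1 := by
    intro z t
    haveI := R.law_prob z t
    exact prob_le_one
  set εy : L → ℝ≥0∞ := fun y => R.law (y : X) (ty y) U / 2 with hεdef
  set O : L → Set X := fun y => {z | εy y < R.law z (ty y) U} with hOdef
  have hOopen : ∀ y, IsOpen (O y) := fun y => R.isOpen_law_pos (ty y) hUopen _
  have hcover : L ⊆ ⋃ y : L, O y := by
    intro z hz
    refine Set.mem_iUnion.mpr ⟨⟨z, hz⟩, ?_⟩
    exact ENNReal.half_lt_self (hty ⟨z, hz⟩).ne' (lt_of_le_of_lt (hlawle z _)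
      ENNReal.one_lt_top).ne
  obtain ⟨s, hs⟩ := hLcomp.elim_finite_subcover O hOopen hcover
  obtain ⟨x, hx⟩ := hLne
  obtain ⟨y0, hy0s, _⟩ := Set.mem_iUnion₂.mp (hs hx)
  set δ0 : ℝ≥0∞ := s.inf' ⟨y0, hy0s⟩ εy with hδ0def
  have hδ0pos : 0 < δ0 := by
    rw [hδ0def]; refine (Finset.lt_inf'_iff _).2 ?_
    intro y _
    exact ENNReal.half_pos (hty y).ne'
  have hδ0le : δ0 ≤ 1 := by
    refine le_trans (Finset.inf'_le εy hy0s) ?_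
    rw [hεdef]
    exact le_trans (ENNReal.half_le_self) (hlawle _ _)
  refine ⟨δ0, hδ0pos, hδ0le, fun z hz => ?_⟩
  obtain ⟨y, hys, hzO⟩ := Set.mem_iUnion₂.mp (hs hz)
  exact ⟨ty y, le_trans (Finset.inf'_le εy hys) (le_of_lt hzO)⟩

/-- Main abstract lemma: accessibility of a contracting open set forces a.s. stability. -/
lemma asStable_of_access {L : Set X} (hLclosed : IsClosed L)
    (hLinv : ∀ y ∈ L, ∀ t, R.law y t L = 1)
    {U : Set X} (hUopen : IsOpen U) (hEUpos : 0 < R.P (R.EU U))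
    (haccess : ∀ y ∈ L, ∃ t, 0 < R.law y t U)
    {x : X} (hx : x ∈ L) : R.asStable x := by
  classical
  haveI := R.hprob
  obtain ⟨δ0, hδ0pos, hδ0le, hunif⟩ :=
    R.unif_access hLclosed.isCompact ⟨x, hx⟩ hUopen haccess
  set c := R.P (R.EU U) with hcdef
  have hcle : c ≤ 1 := le_trans (measure_mono (Set.subset_univ _)) (by simp)
  have hδtop : δ0 * c ≠ ⊤ :=
    ne_top_of_le_ne_top ENNReal.one_ne_top (le_trans (mul_le_mul' hδ0le hcle) (by simp))
  rw [asStable, R.stable_section x]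
  refine R.levy_one x R.measSet_Wstab (R.measSet_section R.measSet_Wstab x) ?_
    (δ := δ0 * c) (ENNReal.mul_pos hδ0pos.ne' hEUpos.ne') hδtop
    hLclosed.measurableSet (hLinv x hx) ?_
  · intro t ω hω
    have hst : ω ∈ {ω'' | R.stablePair ω'' x} := by
      simp only [Set.mem_setOf_eq, Wstab, Set.mem_iUnion, Set.mem_prod, exists_prop] at hω
      obtain ⟨V, hVB, hzV, hc⟩ := hω
      exact R.stable_comp t ω x (TopologicalSpace.isOpen_of_mem_countableBasis hVB) hzV hc
    rwa [R.stable_section x] at hst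
  · intro z hz
    obtain ⟨t, ht⟩ := hunif z hz
    rw [← R.stable_section z]
    refine le_trans ?_ (R.stable_prob_lb hUopen t z)
    exact mul_le_mul' ht le_rfl

end MRDS
namespace MRDS
variable {Ω X : Type*} [mΩ : MeasurableSpace Ω] [MetricSpace X] [CompactSpace X]
  [mX : MeasurableSpace X] [BorelSpace X] (R : MRDS Ω X)

/-- the set of pairs `(z, ω)` whose trajectory converges to `K` -/
def Wconv (R : MRDS Ω X) (K : Set X) : Set (X × Ω) :=
  {p | Tendsto (fun s => Metric.infDist (R.φ s p.2 p.1) K) atTop (𝓝 0)}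

lemma measSet_Wconv (K : Set X) : MeasurableSet[mX.prod R.mSup] (R.Wconv K) := by
  have hmeas : ∀ s : ℕ, @Measurable (X × Ω) ℝ (mX.prod R.mSup) _
      (fun p => Metric.infDist (R.φ s p.2 p.1) K) := by
    intro s
    have hsw : @Measurable (X × Ω) (Ω × X) (mX.prod (R.F s)) ((R.F s).prod mX) Prod.swap :=
      @measurable_swap X Ω mX (R.F s)
    have hφ : @Measurable (X × Ω) X (mX.prod (R.F s)) mX (fun p => R.φ s p.2 p.1) :=
      (R.hφmeas s).comp hsw
    have h1 : @Measurable (X × Ω) ℝ (mX.prod (R.F s)) _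
        (fun p => Metric.infDist (R.φ s p.2 p.1) K) :=
      (Metric.continuous_infDist_pt K).measurable.comp hφ
    exact h1.mono (prodmono (R.F_le_mSup s)) le_rfl
  have heq : R.Wconv K = ⋂ (n : ℕ), ⋃ (N : ℕ), ⋂ (s : ℕ), ⋂ (_ : N ≤ s),
      {p : X × Ω | Metric.infDist (R.φ s p.2 p.1) K < 1 / ((n : ℝ) + 1)} := by
    ext p
    simp only [Wconv, Set.mem_setOf_eq, Set.mem_iInter, Set.mem_iUnion]
    constructor
    · intro h n
      have hev : ∀ᶠ s in atTop, Metric.infDist (R.φ s p.2 p.1) K < 1 / ((n : ℝ) + 1) :=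
        h.eventually (Filter.Tendsto.eventually_lt_const (by positivity) tendsto_id)
      obtain ⟨N, hN⟩ := hev.exists_forall_of_atTop
      exact ⟨N, fun s hs => hN s hs⟩
    · intro h
      rw [Metric.tendsto_atTop]
      intro ε hε
      obtain ⟨n, hn⟩ := exists_nat_one_div_lt hε
      obtain ⟨N, hN⟩ := h n
      refine ⟨N, fun s hs => ?_⟩
      have := hN s hs
      rw [Real.dist_eq, sub_zero, abs_of_nonneg Metric.infDist_nonneg]
      exact lt_trans this hn
  rw [heq]
  refine MeasurableSet.iInter fun n => MeasurableSet.iUnion fun N =>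
    MeasurableSet.iInter fun s => MeasurableSet.iInter fun _ => ?_
  exact (hmeas s) measurableSet_Iio

/-- shifting a convergent trajectory -/
lemma Wconv_shift (K : Set X) (t : ℕ) (x : X) :
    {ω | (R.φ t ω x, R.θ t ω) ∈ R.Wconv K} ⊆ {ω' | (x, ω') ∈ R.Wconv K} := by
  intro ω hω
  simp only [Wconv, Set.mem_setOf_eq] at hω ⊢
  rw [← Filter.tendsto_add_atTop_iff_nat t]
  have heq : (fun s => Metric.infDist (R.φ (s + t) ω x) K)
      = fun s => Metric.infDist (R.φ s (R.θ t ω) (R.φ t ω x)) K := by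
    funext s
    rw [add_comm, R.hφcocycle t s ω]
    rfl
  rw [heq]
  exact hω

/-- lower bound for the probability of converging to K, given access to a
contracting neighbourhood of a point of K -/
lemma conv_prob_lb {K U : Set X} (hKcl : IsClosed K)
    (hKinv : ∀ y ∈ K, ∀ t, R.law y t K = 1) (hUopen : IsOpen U)
    {x0 : X} (hx0U : x0 ∈ U) (hx0K : x0 ∈ K) (t : ℕ) (z : X) :
    R.law z t U * R.P (R.EU U) ≤ R.P {ω' | (z, ω') ∈ R.Wconv K} := by
  classical
  haveI := R.hprob
  -- the invariant-trajectory event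
  set I0 : Set Ω := ⋂ s : ℕ, {ω' | R.φ s ω' x0 ∈ K} with hI0def
  have hI0meas : MeasurableSet[R.mSup] I0 :=
    MeasurableSet.iInter fun s => R.F_le_mSup s _ ((R.meas_phi_pt s x0) hKcl.measurableSet)
  have hI0one : R.P I0 = 1 := by
    refine meas_one_iInter (fun s => (R.meas_phi_pt' s x0) hKcl.measurableSet) (fun s => ?_)
    rw [← R.law_apply x0 s hKcl.measurableSet]
    exact hKinv x0 hx0K s
  set G : Set Ω := R.EU U ∩ I0 with hGdef
  have hGmeas : MeasurableSet[R.mSup] G := (R.measSet_EU U).inter hI0meas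
  have hGP : R.P G = R.P (R.EU U) := by
    rw [hGdef]
    refine measure_inter_conull ?_
    rw [prob_compl_eq_zero_iff (R.mSup_le _ hI0meas)]
    exact hI0one
  -- inclusion
  have hsub : {ω' | R.φ t ω' z ∈ U} ∩ R.θ t ⁻¹' G ⊆ {ω' | (z, ω') ∈ R.Wconv K} := by
    rintro ω' ⟨hzU, hG⟩
    have hEU : R.contracts (R.θ t ω') U := hG.1
    have hI : ∀ s, R.φ s (R.θ t ω') x0 ∈ K := fun s => Set.mem_iInter.mp hG.2 s
    simp only [Wconv, Set.mem_setOf_eq]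
    rw [← Filter.tendsto_add_atTop_iff_nat t]
    -- infEdist squeeze
    have hed : Tendsto (fun s => EMetric.infEdist (R.φ (s + t) ω' z) K) atTop (𝓝 0) := by
      refine tendsto_of_tendsto_of_tendsto_of_le_of_le tendsto_const_nhds hEU
        (fun _ => zero_le) (fun s => ?_)
      have hco : R.φ (s + t) ω' z = R.φ s (R.θ t ω') (R.φ t ω' z) := by
        rw [add_comm, R.hφcocycle t s ω']; rfl
      rw [hco]
      refine le_trans (EMetric.infEdist_le_edist_of_mem (hI s)) ?_
      exact EMetric.edist_le_diam_of_mem (Set.mem_image_of_mem _ hzU)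
        (Set.mem_image_of_mem _ hx0U)
    have := (ENNReal.tendsto_toReal (ENNReal.zero_ne_top)).comp hed
    exact this
  have hind := R.indep_mul t (A := {ω' | R.φ t ω' z ∈ U})
    ((R.meas_phi_pt t z) hUopen.measurableSet) hGmeas
  calc R.law z t U * R.P (R.EU U)
      = R.P {ω' | R.φ t ω' z ∈ U} * R.P G := by
        rw [R.law_apply z t hUopen.measurableSet, hGP]
    _ = R.P ({ω' | R.φ t ω' z ∈ U} ∩ R.θ t ⁻¹' G) := hind.symm
    _ ≤ _ := measure_mono hsub

end MRDS
open TopologicalSpace in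
/-- If `K` is a minimal set admitting stable trajectories, every point of `K` is almost
surely stable; if moreover `K` is the only minimal set, every point of `X` is almost
surely stable and every trajectory almost surely converges to `K`. -/
theorem stmt11 {Ω X : Type*} [MeasurableSpace Ω] [MetricSpace X] [CompactSpace X]
    [MeasurableSpace X] [BorelSpace X] (R : MRDS Ω X)
    (K : Set X) (hmin : R.Minimal K)
    (hstab : 0 < R.P {ω | ∃ x ∈ K, R.stablePair ω x}) :
    (∀ x ∈ K, R.asStable x) ∧
    ((∀ K' : Set X, R.Minimal K' → K' = K) →
      (∀ x : X, R.asStable x) ∧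
      ∀ x : X, ∀ᵐ ω ∂ R.P,
        Tendsto (fun t => Metric.infDist (R.φ t ω x) K) atTop (𝓝 0)) := by
  classical
  haveI := R.hprob
  -- Step A: find a basis open set V meeting K which contracts with positive probability.
  set J : Set (Set X) := {V ∈ countableBasis X | (V ∩ K).Nonempty} with hJdef
  have hJc : J.Countable := (countable_countableBasis X).mono fun V hV => hV.1
  have hsub : {ω | ∃ x ∈ K, R.stablePair ω x} ⊆ ⋃ V ∈ J, R.EU V := by
    rintro ω ⟨x, hxK, hst⟩
    obtain ⟨V, hVB, hxV, hω⟩ := (R.stable_iff_basis ω x).mp hst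
    exact Set.mem_biUnion ⟨hVB, ⟨x, hxV, hxK⟩⟩ hω
  have hex : ∃ V ∈ J, 0 < R.P (R.EU V) := by
    by_contra h
    push_neg at h
    have h0 : ∀ V ∈ J, R.P (R.EU V) = 0 := fun V hV => le_antisymm (h V hV) (zero_le)
    have : R.P (⋃ V ∈ J, R.EU V) = 0 := (measure_biUnion_null_iff hJc).mpr h0
    exact absurd (lt_of_lt_of_le hstab (measure_mono hsub)) (by rw [this]; exact lt_irrefl 0)
  obtain ⟨V, ⟨hVB, hVK⟩, hEUV⟩ := hex
  have hVopen : IsOpen V := isOpen_of_mem_countableBasis hVB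
  -- Part 1
  have part1 : ∀ x ∈ K, R.asStable x := fun x hx =>
    R.asStable_of_access hmin.2.1.1 hmin.2.1.2 hVopen hEUV
      (R.access_of_minimal hmin hVopen hVK) hx
  refine ⟨part1, fun huniq => ?_⟩
  -- Part 2: global accessibility of V
  have haccessX : ∀ y ∈ (Set.univ : Set X), ∃ t, 0 < R.law y t V := by
    set K'' := {y ∈ (Set.univ : Set X) | ∀ t, R.law y t V = 0} with hK''def
    have hinv : R.FwdInv K'' := R.noAccess_fwdInv R.fwdInv_univ hVopen
    have hKe : K'' = ∅ := by
      by_contra hne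
      obtain ⟨M, hMsub, hMmin⟩ :=
        R.exists_minimal_subset hinv (Set.nonempty_iff_ne_empty.mpr hne)
      obtain ⟨x0, hx0V, hx0K⟩ := hVK
      have hMK : M = K := huniq M hMmin
      have hx0M : x0 ∈ K'' := hMsub (hMK.symm ▸ hx0K)
      have := hx0M.2 0
      rw [R.law_zero hVopen.measurableSet hx0V] at this
      exact one_ne_zero this
    intro y _
    by_contra h
    push_neg at h
    have : y ∈ K'' := ⟨Set.mem_univ y, fun t => le_antisymm (h t) (zero_le)⟩
    rw [hKe] at this
    exact this
  have part2a : ∀ x : X, R.asStable x := fun x =>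
    R.asStable_of_access isClosed_univ (fun y _ t => R.fwdInv_univ.2 y (Set.mem_univ y) t)
      hVopen hEUV haccessX (Set.mem_univ x)
  refine ⟨part2a, fun x => ?_⟩
  -- Part 2b : convergence to K
  obtain ⟨x0, hx0V, hx0K⟩ := hVK
  obtain ⟨δ0, hδ0pos, hδ0le, hunif⟩ :=
    R.unif_access isCompact_univ ⟨x0, Set.mem_univ x0⟩ hVopen haccessX
  set c := R.P (R.EU V) with hcdef
  have hcle : c ≤ 1 := le_trans (measure_mono (Set.subset_univ _)) (by simp)
  have hδtop : δ0 * c ≠ ⊤ :=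
    ne_top_of_le_ne_top ENNReal.one_ne_top (le_trans (mul_le_mul' hδ0le hcle) (by simp))
  have hone : R.P {ω' | (x, ω') ∈ R.Wconv K} = 1 := by
    refine R.levy_one x (R.measSet_Wconv K) (R.measSet_section (R.measSet_Wconv K) x)
      (fun t => R.Wconv_shift K t x)
      (δ := δ0 * c) (ENNReal.mul_pos hδ0pos.ne' hEUV.ne') hδtop
      MeasurableSet.univ (fun t => by haveI := R.law_prob x t; exact measure_univ) ?_
    intro z hz
    obtain ⟨t, ht⟩ := hunif z hz
    refine le_trans (mul_le_mul' ht le_rfl) ?_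
    exact R.conv_prob_lb hmin.2.1.1 hmin.2.1.2 hVopen hx0V hx0K t z
  have hmeas : MeasurableSet {ω' | (x, ω') ∈ R.Wconv K} :=
    R.mSup_le _ (R.measSet_section (R.measSet_Wconv K) x)
  rw [MeasureTheory.ae_iff]
  have hc : {ω | ¬ Tendsto (fun t => Metric.infDist (R.φ t ω x) K) atTop (𝓝 0)}
      = {ω' | (x, ω') ∈ R.Wconv K}ᶜ := rfl
  rw [hc, measure_compl hmeas (measure_ne_top _ _), hone, measure_univ, tsub_self]
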